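/- Let Σ̂ be symmetric positive definite and S symmetric positive semidefinite d×d matrices, let μ̂, μ ∈ ℝ^d. With G = Σ̂^{-1/2}(Σ̂^{1/2} S² Σ̂^{1/2})^{1/2} Σ̂^{-1/2} and g = μ - G μ̂, the affine map Δ(a) = G a + g pushes the Gaussian distribution N(μ̂, Σ̂) forward to the Gaussian distribution N(μ, S²). -/

import Mathlib

open ProbabilityTheory MeasureTheory Matrix

/-- The standard logistic (sigmoid) function. -/
noncomputable def sigmoid (t : ℝ) : ℝ := 1 / (1 + Real.exp (-t))

/-- CDF of the standard one-dimensional Gaussian. -/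
noncomputable def stdNormalCDF (x : ℝ) : ℝ := (gaussianReal 0 1 (Set.Iic x)).toReal

/-- Quantile function of the standard one-dimensional Gaussian. -/
noncomputable def stdNormalQuantile (p : ℝ) : ℝ := sInf {x : ℝ | p ≤ stdNormalCDF x}

/-- `P` is the multivariate Gaussian `N(m, C)`: every one-dimensional linear marginal
`θᵀX` is the real Gaussian with mean `θᵀm` and variance `θᵀCθ`. -/
def IsMultiGaussian {d : ℕ} (P : Measure (Fin d → ℝ)) (m : Fin d → ℝ)
    (C : Matrix (Fin d) (Fin d) ℝ) : Prop :=
  ∀ θ : Fin d → ℝ,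
    P.map (fun x => θ ⬝ᵥ x) = gaussianReal (θ ⬝ᵥ m) (Real.toNNReal (θ ⬝ᵥ C.mulVec θ))

/-- Euclidean (ℓ²) norm of a vector in ℝ^d. -/
noncomputable def euclNorm {d : ℕ} (v : Fin d → ℝ) : ℝ := Real.sqrt (v ⬝ᵥ v)

/-- Frobenius norm of a d×d real matrix. -/
noncomputable def frobNorm {d : ℕ} (A : Matrix (Fin d) (Fin d) ℝ) : ℝ :=
  Real.sqrt (∑ i, ∑ j, (A i j) ^ 2)

lemma aux_psd {d : ℕ} {A M : Matrix (Fin d) (Fin d) ℝ} (hA : A.IsHermitian)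
    (hM : M.PosSemidef) : (A * M * A).PosSemidef := by
  have h := hM.mul_mul_conjTranspose_same A
  rwa [hA.eq] at h

/-- The square root of a positive semidefinite matrix, as defined in the older Mathlib
(`Matrix.PosSemidef.sqrt`, since removed). -/
noncomputable def Matrix.PosSemidef.sqrt {n : Type*} [Fintype n] [DecidableEq n]
    {A : Matrix n n ℝ} (hA : A.PosSemidef) : Matrix n n ℝ :=
  hA.1.eigenvectorUnitary.1 * diagonal ((√·) ∘ hA.1.eigenvalues) *
    (star hA.1.eigenvectorUnitary : Matrix n n ℝ)

lemma Matrix.PosSemidef.posSemidef_sqrt {n : Type*} [Fintype n] [DecidableEq n]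
    {A : Matrix n n ℝ} (hA : A.PosSemidef) : hA.sqrt.PosSemidef := by
  have hD : (diagonal ((√·) ∘ hA.1.eigenvalues) : Matrix n n ℝ).PosSemidef := by
    apply PosSemidef.diagonal
    intro i
    simp [Function.comp, Real.sqrt_nonneg]
  have h := hD.mul_mul_conjTranspose_same (hA.1.eigenvectorUnitary : Matrix n n ℝ)
  unfold Matrix.PosSemidef.sqrt
  simpa [Matrix.star_eq_conjTranspose] using h

lemma Matrix.PosSemidef.sqrt_mul_self {n : Type*} [Fintype n] [DecidableEq n]
    {A : Matrix n n ℝ} (hA : A.PosSemidef) : hA.sqrt * hA.sqrt = A := by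
  have hU : (star hA.1.eigenvectorUnitary : Matrix n n ℝ) * hA.1.eigenvectorUnitary.1 = 1 := by
    simp
  have hD : (diagonal ((√·) ∘ hA.1.eigenvalues) : Matrix n n ℝ) *
      diagonal ((√·) ∘ hA.1.eigenvalues) = diagonal (RCLike.ofReal ∘ hA.1.eigenvalues) := by
    rw [diagonal_mul_diagonal]
    congr 1
    funext i
    simp [Real.mul_self_sqrt (hA.eigenvalues_nonneg i)]
  conv_rhs => rw [hA.1.spectral_theorem]
  rw [Unitary.conjStarAlgAut_apply, ← hD]
  unfold Matrix.PosSemidef.sqrt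
  calc _ = hA.1.eigenvectorUnitary.1 * diagonal ((√·) ∘ hA.1.eigenvalues) *
        ((star hA.1.eigenvectorUnitary : Matrix n n ℝ) * hA.1.eigenvectorUnitary.1) *
        diagonal ((√·) ∘ hA.1.eigenvalues) * (star hA.1.eigenvectorUnitary : Matrix n n ℝ) := by
          simp only [mul_assoc]
    _ = _ := by rw [hU, mul_one]; simp only [mul_assoc]

theorem stmt4 {d : ℕ} {Sig S : Matrix (Fin d) (Fin d) ℝ}
    (hSig : Sig.PosDef) (hS : S.PosSemidef) (μh μ : Fin d → ℝ)
    (P : Measure (Fin d → ℝ)) [IsProbabilityMeasure P]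
    (hP : IsMultiGaussian P μh Sig) :
    ∀ G : Matrix (Fin d) (Fin d) ℝ,
      G = hSig.posSemidef.sqrt⁻¹ *
            (aux_psd hSig.posSemidef.posSemidef_sqrt.1 (hS.pow 2)).sqrt *
            hSig.posSemidef.sqrt⁻¹ →
      IsMultiGaussian (P.map (fun a => G.mulVec a + (μ - G.mulVec μh))) μ (S ^ 2) := by
  intro G hG θ
  set A := hSig.posSemidef.sqrt with hAdef
  have hAherm : A.IsHermitian := hSig.posSemidef.posSemidef_sqrt.1
  set B := (aux_psd hAherm (hS.pow 2)).sqrt with hBdef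
  have hBB : B * B = A * S ^ 2 * A := (aux_psd hAherm (hS.pow 2)).sqrt_mul_self
  have hAA : A * A = Sig := hSig.posSemidef.sqrt_mul_self
  have hdetA : IsUnit A.det := by
    have h2 : A.det * A.det = Sig.det := by rw [← Matrix.det_mul, hAA]
    have hne : A.det ≠ 0 := by
      intro h
      rw [h, mul_zero] at h2
      exact (ne_of_gt hSig.det_pos) h2.symm
    exact isUnit_iff_ne_zero.mpr hne
  have hAinv : A⁻¹ * A = 1 := Matrix.nonsing_inv_mul A hdetA
  have hAinv' : A * A⁻¹ = 1 := Matrix.mul_nonsing_inv A hdetA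
  have hGherm : G.IsHermitian := by
    rw [hG]
    have hBherm : B.IsHermitian := (aux_psd hAherm (hS.pow 2)).posSemidef_sqrt.1
    have hAinvherm : (A⁻¹).IsHermitian := hAherm.inv
    unfold Matrix.IsHermitian
    rw [conjTranspose_mul, conjTranspose_mul, hAinvherm.eq, hBherm.eq, mul_assoc]
  have hGT : Gᵀ = G := by
    have := hGherm.eq
    simpa [Matrix.conjTranspose_eq_transpose_of_trivial] using this
  have hG' : G = A⁻¹ * B * A⁻¹ := hG
  have hkey : G * Sig * G = S ^ 2 := by
    calc G * Sig * G
        = A⁻¹ * B * A⁻¹ * (A * A) * (A⁻¹ * B * A⁻¹) := by rw [hG', hAA]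
      _ = A⁻¹ * (B * ((A⁻¹ * A) * (A * A⁻¹)) * B) * A⁻¹ := by noncomm_ring
      _ = A⁻¹ * (B * B) * A⁻¹ := by rw [hAinv, hAinv', one_mul, mul_one]
      _ = A⁻¹ * (A * S ^ 2 * A) * A⁻¹ := by rw [hBB]
      _ = (A⁻¹ * A) * S ^ 2 * (A * A⁻¹) := by noncomm_ring
      _ = S ^ 2 := by rw [hAinv, hAinv', one_mul, mul_one]
  have hmeasΔ : Measurable (fun a : Fin d → ℝ => G.mulVec a + (μ - G.mulVec μh)) :=
    ((Continuous.matrix_mulVec continuous_const continuous_id).add continuous_const).measurable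
  have hmeasθ : Measurable (fun x : Fin d → ℝ => θ ⬝ᵥ x) :=
    (Continuous.dotProduct continuous_const continuous_id).measurable
  rw [Measure.map_map hmeasθ hmeasΔ]
  have hfun : ((fun x : Fin d → ℝ => θ ⬝ᵥ x) ∘ (fun a => G.mulVec a + (μ - G.mulVec μh)))
      = (fun t : ℝ => t + θ ⬝ᵥ (μ - G.mulVec μh)) ∘ (fun a : Fin d → ℝ => (θ ᵥ* G) ⬝ᵥ a) := by
    funext a
    simp only [Function.comp_apply, dotProduct_add, dotProduct_mulVec]
  have hmeasθ' : Measurable (fun a : Fin d → ℝ => (θ ᵥ* G) ⬝ᵥ a) :=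
    (Continuous.dotProduct continuous_const continuous_id).measurable
  rw [hfun, ← Measure.map_map (measurable_add_const (θ ⬝ᵥ (μ - G.mulVec μh))) hmeasθ',
    hP (θ ᵥ* G), gaussianReal_map_add_const]
  congr 1
  · rw [← dotProduct_mulVec θ G μh, dotProduct_sub]
    ring
  · congr 1
    have hvm : θ ᵥ* G = G *ᵥ θ := by rw [← vecMul_transpose, hGT]
    calc (θ ᵥ* G) ⬝ᵥ Sig *ᵥ (θ ᵥ* G)
        = (θ ᵥ* G) ⬝ᵥ Sig *ᵥ (G *ᵥ θ) := by rw [hvm]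
      _ = (θ ᵥ* G) ⬝ᵥ (Sig * G) *ᵥ θ := by rw [mulVec_mulVec]
      _ = ((θ ᵥ* G) ᵥ* (Sig * G)) ⬝ᵥ θ := by rw [dotProduct_mulVec]
      _ = (θ ᵥ* (G * Sig * G)) ⬝ᵥ θ := by rw [vecMul_vecMul, mul_assoc]
      _ = (θ ᵥ* S ^ 2) ⬝ᵥ θ := by rw [hkey]
      _ = θ ⬝ᵥ (S ^ 2) *ᵥ θ := by rw [← dotProduct_mulVec]
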